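/- Consider a reaction network on n species with m = n+1 reactions, with source matrix A ∈ ℤ^{n×(n+1)} (nonnegative entries) and stoichiometric matrix Γ ∈ ℤ^{n×(n+1)} (with A + Γ entrywise nonnegative), such that Γ has rank n, the network is dynamically nontrivial (there exists v ∈ ℝ^{n+1} with all entries positive and Γv = 0), and the n+1 columns of A are affinely independent in ℝ^n. Then for every vector of positive rate constants κ ∈ ℝ^{n+1}_{>0}, the associated mass-action differential equation ẋ = f(x) has exactly one equilibrium x̄ in the open positive orthant ℝ^n_{>0} (i.e., exactly one x̄ ∈ ℝ^n_{>0} with f(x̄) = 0), and this equilibrium is nondegenerate: the Jacobian matrix Df(x̄) has nonzero determinant. -/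

import Mathlib

open scoped BigOperators

/-- The mass-action vector field of a reaction network with source matrix `A`,
stoichiometric matrix `Γ` and rate constants `κ`. -/
noncomputable def massAction {n m : ℕ} (A Γ : Matrix (Fin n) (Fin m) ℤ)
    (κ : Fin m → ℝ) (x : Fin n → ℝ) : Fin n → ℝ :=
  fun i => ∑ j, (Γ i j : ℝ) * κ j * ∏ k, x k ^ (A k j).toNat

/-- The Jacobian matrix of a vector field `f : ℝⁿ → ℝⁿ` at a point `x`. -/
noncomputable def jacobianMatrix {n : ℕ} (f : (Fin n → ℝ) → (Fin n → ℝ))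
    (x : Fin n → ℝ) : Matrix (Fin n) (Fin n) ℝ :=
  Matrix.of fun i k => fderiv ℝ (fun y => f y i) x (Pi.single k 1)

open Matrix

/-- Key consequence of affine independence: a vector orthogonal to all the
differences of the points must vanish. -/
lemma crn_aff_key {n : ℕ} (a : Fin (n + 1) → Fin n → ℝ)
    (haff : AffineIndependent ℝ a) (u : Fin n → ℝ)
    (h : ∀ j, a j ⬝ᵥ u = a 0 ⬝ᵥ u) : u = 0 := by
  rw [affineIndependent_iff_linearIndependent_vsub ℝ a 0] at haff
  have hcard : Fintype.card {j : Fin (n + 1) // j ≠ 0} = n := by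
    simp [Fintype.card_subtype_compl]
  have hspan : Submodule.span ℝ (Set.range fun j : {j : Fin (n+1) // j ≠ 0} => a j -ᵥ a 0) = ⊤ :=
    haff.span_eq_top_of_card_eq_finrank' (by simp [hcard])
  let φ : (Fin n → ℝ) →ₗ[ℝ] ℝ :=
    { toFun := fun z => z ⬝ᵥ u
      map_add' := fun z w => add_dotProduct z w u
      map_smul' := fun c z => smul_dotProduct c z u }
  have hφ : φ = (0 : (Fin n → ℝ) →ₗ[ℝ] ℝ) := by
    apply LinearMap.ext_on hspan
    rintro z ⟨j, rfl⟩
    have hd : (a j -ᵥ a 0) ⬝ᵥ u = a j ⬝ᵥ u - a 0 ⬝ᵥ u := by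
      simp [vsub_eq_sub, sub_dotProduct]
    show (a ↑j -ᵥ a 0) ⬝ᵥ u = (0 : (Fin n → ℝ) →ₗ[ℝ] ℝ) (a ↑j -ᵥ a 0)
    rw [hd, h j]
    simp
  have h0 : u ⬝ᵥ u = 0 := by
    simpa [φ] using congrFun (congrArg DFunLike.coe hφ) u
  exact (dotProduct_self_eq_zero).mp h0

/-- Kernel of a rank-`n` matrix with `n+1` columns is spanned by any nonzero
kernel vector. -/
lemma crn_ker_key {n : ℕ} (G : Matrix (Fin n) (Fin (n + 1)) ℝ) (hrank : G.rank = n)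
    (v : Fin (n + 1) → ℝ) (hv : v ≠ 0) (hGv : G.mulVec v = 0)
    (w : Fin (n + 1) → ℝ) (hw : G.mulVec w = 0) : ∃ s : ℝ, w = s • v := by
  have hrn := G.mulVecLin.finrank_range_add_finrank_ker
  rw [show Module.finrank ℝ (Fin (n+1) → ℝ) = n + 1 by simp] at hrn
  have hkerrank : Module.finrank ℝ (LinearMap.ker G.mulVecLin) = 1 := by
    have : G.rank = Module.finrank ℝ (LinearMap.range G.mulVecLin) := rfl
    omega
  have hle : (Submodule.span ℝ {v}) ≤ LinearMap.ker G.mulVecLin := by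
    rw [Submodule.span_singleton_le_iff_mem]
    simpa [Matrix.mulVecLin_apply] using hGv
  have heq : Submodule.span ℝ {v} = LinearMap.ker G.mulVecLin := by
    apply Submodule.eq_of_le_of_finrank_le hle
    rw [hkerrank, finrank_span_singleton hv]
  have hwmem : w ∈ Submodule.span ℝ {v} := by
    rw [heq]; simpa [Matrix.mulVecLin_apply] using hw
  obtain ⟨s, hs⟩ := Submodule.mem_span_singleton.mp hwmem
  exact ⟨s, hs.symm⟩

/-- Solvability of the linear system given by differences of affinely
independent points. -/
lemma crn_solve_key {n : ℕ} (a : Fin (n + 1) → Fin n → ℝ)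
    (haff : AffineIndependent ℝ a) (c : Fin (n + 1) → ℝ) :
    ∃ y : Fin n → ℝ, ∀ j, a j ⬝ᵥ y - a 0 ⬝ᵥ y = c j - c 0 := by
  classical
  set N : Matrix (Fin n) (Fin n) ℝ := Matrix.of fun r i => a r.succ i - a 0 i with hN
  have hmv : ∀ y r, N.mulVec y r = a r.succ ⬝ᵥ y - a 0 ⬝ᵥ y := by
    intro y r
    simp [N, Matrix.mulVec, dotProduct, sub_mul, Finset.sum_sub_distrib]
  have hdet : N.det ≠ 0 := by
    intro hd
    obtain ⟨u, hu, hNu⟩ := (Matrix.exists_mulVec_eq_zero_iff).mpr hd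
    apply hu
    apply crn_aff_key a haff
    intro j
    induction j using Fin.cases with
    | zero => rfl
    | succ r =>
      have := congrFun hNu r
      rw [hmv] at this
      simp only [Pi.zero_apply] at this
      linarith
  have hunit : IsUnit N.det := isUnit_iff_ne_zero.mpr hdet
  refine ⟨N⁻¹.mulVec (fun r => c r.succ - c 0), ?_⟩
  have key : ∀ r : Fin n, a r.succ ⬝ᵥ (N⁻¹.mulVec fun r => c r.succ - c 0)
      - a 0 ⬝ᵥ (N⁻¹.mulVec fun r => c r.succ - c 0) = c r.succ - c 0 := by
    intro r
    rw [← hmv]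
    rw [Matrix.mulVec_mulVec, Matrix.mul_nonsing_inv _ hunit, Matrix.one_mulVec]
  intro j
  induction j using Fin.cases with
  | zero => simp
  | succ r => exact key r

lemma crn_hasFDerivAt_mono {n : ℕ} (e : Fin n → ℕ) (x : Fin n → ℝ) :
    HasFDerivAt (fun y : Fin n → ℝ => ∏ k, y k ^ e k)
      (∑ k, (∏ l ∈ Finset.univ.erase k, x l ^ e l) •
        (((e k : ℝ) * x k ^ (e k - 1)) • (ContinuousLinearMap.proj k : (Fin n → ℝ) →L[ℝ] ℝ))) x := by
  classical
  apply HasFDerivAt.finset_prod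
  intro k _
  have h1 : HasDerivAt (fun t : ℝ => t ^ e k) ((e k : ℝ) * x k ^ (e k - 1)) (x k) :=
    hasDerivAt_pow (e k) (x k)
  exact h1.comp_hasFDerivAt x (ContinuousLinearMap.proj k : (Fin n → ℝ) →L[ℝ] ℝ).hasFDerivAt

lemma crn_jac_entry {n m : ℕ} (A Γ : Matrix (Fin n) (Fin m) ℤ) (κ : Fin m → ℝ)
    (x : Fin n → ℝ) (i k : Fin n) :
    jacobianMatrix (massAction A Γ κ) x i k =
      ∑ j, (Γ i j : ℝ) * κ j *
        (((A k j).toNat : ℝ) * x k ^ ((A k j).toNat - 1) *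
          ∏ l ∈ Finset.univ.erase k, x l ^ (A l j).toNat) := by
  classical
  have hd : HasFDerivAt (fun y => massAction A Γ κ y i)
      (∑ j, ((Γ i j : ℝ) * κ j) • (∑ k', (∏ l ∈ Finset.univ.erase k', x l ^ (A l j).toNat) •
        ((((A k' j).toNat : ℝ) * x k' ^ ((A k' j).toNat - 1)) •
          (ContinuousLinearMap.proj k' : (Fin n → ℝ) →L[ℝ] ℝ)))) x := by
    apply HasFDerivAt.fun_sum
    intro j _
    exact (crn_hasFDerivAt_mono (fun l => (A l j).toNat) x).const_mul _
  rw [jacobianMatrix]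
  show fderiv ℝ (fun y => massAction A Γ κ y i) x (Pi.single k 1) = _
  rw [hd.fderiv]
  rw [ContinuousLinearMap.sum_apply]
  apply Finset.sum_congr rfl
  intro j _
  rw [ContinuousLinearMap.smul_apply, ContinuousLinearMap.sum_apply]
  rw [Finset.sum_eq_single k]
  · simp [mul_assoc, mul_comm, mul_left_comm]
  · intro l _ hl
    simp [Pi.single_apply, hl]
  · simp

/-- A dynamically nontrivial `(n, n+1, n)` network with affinely independent source
complexes has, for every choice of positive rate constants, a unique positive
equilibrium, and this equilibrium is nondegenerate. -/
theorem stmt8 (n : ℕ)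
    (A Γ : Matrix (Fin n) (Fin (n + 1)) ℤ)
    (hA : ∀ i j, 0 ≤ A i j)
    (hAΓ : ∀ i j, 0 ≤ A i j + Γ i j)
    (hrank : (Γ.map (fun z : ℤ => (z : ℝ))).rank = n)
    (hdnt : ∃ v : Fin (n + 1) → ℝ, (∀ j, 0 < v j) ∧
      (Γ.map (fun z : ℤ => (z : ℝ))).mulVec v = 0)
    (haff : AffineIndependent ℝ (fun j : Fin (n + 1) => fun i : Fin n => (A i j : ℝ)))
    (κ : Fin (n + 1) → ℝ) (hκ : ∀ j, 0 < κ j) :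
    ∃ xbar : Fin n → ℝ,
      ((∀ i, 0 < xbar i) ∧ massAction A Γ κ xbar = 0) ∧
      (∀ x' : Fin n → ℝ, (∀ i, 0 < x' i) → massAction A Γ κ x' = 0 → x' = xbar) ∧
      (jacobianMatrix (massAction A Γ κ) xbar).det ≠ 0 := by
  classical
  obtain ⟨v, hv, hΓv⟩ := hdnt
  set G := Γ.map (fun z : ℤ => (z : ℝ)) with hG
  set a : Fin (n + 1) → Fin n → ℝ := fun j i => (A i j : ℝ) with ha
  have hvne : v ≠ 0 := by
    intro h
    have := congrFun h 0
    have h0 := hv 0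
    rw [this] at h0
    exact lt_irrefl _ h0
  have hcast : ∀ i j, ((A i j).toNat : ℝ) = a j i := by
    intro i j
    show ((A i j).toNat : ℝ) = ((A i j : ℤ) : ℝ)
    exact_mod_cast congrArg (Int.cast : ℤ → ℝ) (Int.toNat_of_nonneg (hA i j))
  -- monomials via exponentials
  have hmono : ∀ (x : Fin n → ℝ), (∀ i, 0 < x i) → ∀ j,
      ∏ k, x k ^ (A k j).toNat = Real.exp (a j ⬝ᵥ fun k => Real.log (x k)) := by
    intro x hx j
    rw [dotProduct, Real.exp_sum]
    apply Finset.prod_congr rfl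
    intro k _
    rw [← hcast k j, Real.exp_nat_mul, Real.exp_log (hx k)]
  -- mass action as a matrix-vector product
  have hma : ∀ x : Fin n → ℝ, massAction A Γ κ x
      = G.mulVec (fun j => κ j * ∏ k, x k ^ (A k j).toNat) := by
    intro x
    funext i
    simp only [massAction, Matrix.mulVec, dotProduct, hG, Matrix.map_apply]
    exact Finset.sum_congr rfl fun j _ => by ring
  -- construct the equilibrium
  set c : Fin (n + 1) → ℝ := fun j => Real.log (v j / κ j) with hc
  obtain ⟨y, hy⟩ := crn_solve_key a haff c
  set xbar : Fin n → ℝ := fun k => Real.exp (y k) with hxbar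
  have hxpos : ∀ i, 0 < xbar i := fun i => Real.exp_pos _
  have hlogx : (fun k => Real.log (xbar k)) = y := by
    funext k; simp [hxbar, Real.log_exp]
  set t : ℝ := Real.exp (a 0 ⬝ᵥ y - c 0) with hT
  have ht : 0 < t := Real.exp_pos _
  have keq : ∀ j, κ j * ∏ k, xbar k ^ (A k j).toNat = t * v j := by
    intro j
    rw [hmono xbar hxpos j, hlogx]
    have h1 : a j ⬝ᵥ y = (a 0 ⬝ᵥ y - c 0) + c j := by
      have := hy j; linarith
    rw [h1, Real.exp_add, ← hT]
    have h2 : Real.exp (c j) = v j / κ j := Real.exp_log (div_pos (hv j) (hκ j))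
    rw [h2]
    rw [mul_comm, mul_assoc, div_mul_cancel₀ (v j) (hκ j).ne']
  have heq : massAction A Γ κ xbar = 0 := by
    rw [hma]
    have h1 : (fun j => κ j * ∏ k, xbar k ^ (A k j).toNat) = t • v := by
      funext j; rw [keq j]; simp [smul_eq_mul]
    rw [h1, Matrix.mulVec_smul, hΓv, smul_zero]
  -- uniqueness
  have huniq : ∀ x' : Fin n → ℝ, (∀ i, 0 < x' i) → massAction A Γ κ x' = 0 → x' = xbar := by
    intro x' hx' h0
    set y' : Fin n → ℝ := fun k => Real.log (x' k) with hy'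
    set w : Fin (n + 1) → ℝ := fun j => κ j * ∏ k, x' k ^ (A k j).toNat with hw
    have hGw : G.mulVec w = 0 := by rw [← hma]; exact h0
    obtain ⟨s, hs⟩ := crn_ker_key G hrank v hvne hΓv w hGw
    have hwpos : ∀ j, 0 < w j := by
      intro j
      exact mul_pos (hκ j) (Finset.prod_pos fun k _ => pow_pos (hx' k) _)
    have hst : 0 < s := by
      have h1 : w 0 = s * v 0 := by rw [hs]; simp [smul_eq_mul]
      have := hwpos 0
      nlinarith [hv 0]
    -- take logs
    have hdj : ∀ j, a j ⬝ᵥ (y' - y) = Real.log s - Real.log t := by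
      intro j
      have hwj : κ j * Real.exp (a j ⬝ᵥ y') = s * v j := by
        have h1 : w j = s * v j := by
          have := congrFun hs j
          simpa [smul_eq_mul] using this
        have h2 : w j = κ j * Real.exp (a j ⬝ᵥ y') := by
          simp only [hw]
          rw [hmono x' hx' j, ← hy']
        rw [← h2, h1]
      have hkj : κ j * Real.exp (a j ⬝ᵥ y) = t * v j := by
        have := keq j
        rw [hmono xbar hxpos j, hlogx] at this
        exact this
      have e1 : a j ⬝ᵥ y' = Real.log (s * v j / κ j) := by
        have hh : Real.exp (a j ⬝ᵥ y') = s * v j / κ j := by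
          rw [eq_div_iff (hκ j).ne']
          linarith [hwj]
        rw [← hh, Real.log_exp]
      have e2 : a j ⬝ᵥ y = Real.log (t * v j / κ j) := by
        have hh : Real.exp (a j ⬝ᵥ y) = t * v j / κ j := by
          rw [eq_div_iff (hκ j).ne']
          linarith [hkj]
        rw [← hh, Real.log_exp]
      rw [dotProduct_sub, e1, e2]
      rw [Real.log_div (mul_pos hst (hv j)).ne' (hκ j).ne',
        Real.log_div (mul_pos ht (hv j)).ne' (hκ j).ne',
        Real.log_mul hst.ne' (hv j).ne', Real.log_mul ht.ne' (hv j).ne']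
      ring
    have hu0 : y' - y = 0 := by
      apply crn_aff_key a haff
      intro j
      rw [hdj j, hdj 0]
    have hyy : y' = y := by
      funext k
      have := congrFun hu0 k
      simp only [Pi.sub_apply, Pi.zero_apply] at this
      linarith
    funext k
    have : x' k = Real.exp (y' k) := by rw [hy']; simp [Real.exp_log (hx' k)]
    rw [this, hyy, hxbar]
  -- nondegeneracy
  set M : Matrix (Fin n) (Fin n) ℝ :=
    Matrix.of (fun i k => ∑ j, G i j * (t * v j) * a j k) with hM
  have hJ : jacobianMatrix (massAction A Γ κ) xbar
      = M * Matrix.diagonal (fun k => (xbar k)⁻¹) := by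
    ext i k
    rw [Matrix.mul_diagonal, crn_jac_entry]
    have hterm : ∀ j, (Γ i j : ℝ) * κ j *
        (((A k j).toNat : ℝ) * xbar k ^ ((A k j).toNat - 1) *
          ∏ l ∈ Finset.univ.erase k, xbar l ^ (A l j).toNat)
        = G i j * (t * v j) * a j k * (xbar k)⁻¹ := by
      intro j
      have hGij : G i j = (Γ i j : ℝ) := rfl
      rcases Nat.eq_zero_or_pos (A k j).toNat with h0 | hpos
      · rw [h0, ← hcast k j, h0]
        simp
      · have hsplit : (∏ l, xbar l ^ (A l j).toNat)
            = xbar k ^ (A k j).toNat * ∏ l ∈ Finset.univ.erase k, xbar l ^ (A l j).toNat :=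
          (Finset.mul_prod_erase Finset.univ _ (Finset.mem_univ k)).symm
        have hxk : xbar k ≠ 0 := (hxpos k).ne'
        have hpow : xbar k ^ ((A k j).toNat - 1)
            = xbar k ^ (A k j).toNat * (xbar k)⁻¹ := by
          have hsp : xbar k ^ (A k j).toNat = xbar k ^ ((A k j).toNat - 1) * xbar k := by
            rw [← pow_succ, Nat.sub_add_cancel hpos]
          rw [hsp, mul_assoc, mul_inv_cancel₀ hxk, mul_one]
        have hkeqj := keq j
        rw [hGij, ← hcast k j, hpow]
        calc (Γ i j : ℝ) * κ j *
            (((A k j).toNat : ℝ) * (xbar k ^ (A k j).toNat * (xbar k)⁻¹)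
              * ∏ l ∈ Finset.univ.erase k, xbar l ^ (A l j).toNat)
            = (Γ i j : ℝ) * (κ j * ∏ l, xbar l ^ (A l j).toNat)
              * ((A k j).toNat : ℝ) * (xbar k)⁻¹ := by
              rw [hsplit]; ring
          _ = (Γ i j : ℝ) * (t * v j) * ((A k j).toNat : ℝ) * (xbar k)⁻¹ := by rw [hkeqj]
    calc (∑ j, (Γ i j : ℝ) * κ j *
          (((A k j).toNat : ℝ) * xbar k ^ ((A k j).toNat - 1) *
            ∏ l ∈ Finset.univ.erase k, xbar l ^ (A l j).toNat))
        = ∑ j, G i j * (t * v j) * a j k * (xbar k)⁻¹ :=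
          Finset.sum_congr rfl fun j _ => hterm j
      _ = (∑ j, G i j * (t * v j) * a j k) * (xbar k)⁻¹ := by
          rw [Finset.sum_mul]
      _ = M i k * (xbar k)⁻¹ := rfl
  have hMdet : M.det ≠ 0 := by
    intro hd
    obtain ⟨u, hu, hMu⟩ := (Matrix.exists_mulVec_eq_zero_iff).mpr hd
    apply hu
    set w : Fin (n + 1) → ℝ := fun j => (t * v j) * (a j ⬝ᵥ u) with hwdef
    have hGw : G.mulVec w = 0 := by
      funext i
      have h1 : G.mulVec w i = M.mulVec u i := by
        simp only [Matrix.mulVec, dotProduct, hM, Matrix.of_apply, hwdef,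
          Finset.mul_sum, Finset.sum_mul]
        rw [Finset.sum_comm]
        apply Finset.sum_congr rfl
        intro j _
        apply Finset.sum_congr rfl
        intro k _
        ring
      rw [h1, hMu]
    obtain ⟨s, hs⟩ := crn_ker_key G hrank v hvne hΓv w hGw
    have hconst : ∀ j, a j ⬝ᵥ u = s / t := by
      intro j
      have h1 := congrFun hs j
      simp only [hwdef, Pi.smul_apply, smul_eq_mul] at h1
      have h2 : (t * (a j ⬝ᵥ u)) * v j = s * v j := by rw [← h1]; ring
      have h3 : t * (a j ⬝ᵥ u) = s := mul_right_cancel₀ (hv j).ne' h2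
      rw [eq_div_iff ht.ne']
      linarith
    apply crn_aff_key a haff
    intro j
    rw [hconst j, hconst 0]
  refine ⟨xbar, ⟨hxpos, heq⟩, huniq, ?_⟩
  rw [hJ, Matrix.det_mul, Matrix.det_diagonal]
  exact mul_ne_zero hMdet (Finset.prod_ne_zero_iff.mpr fun k _ => inv_ne_zero (hxpos k).ne')
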